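/- arXiv:1501.03608 — 2 statements merged into one kernel-verified Lean document; each statement's English description precedes it below -/
import Mathlib

section
/- Under the identification of S² ⊂ ℝ³ with CP¹ via stereographic projection from (1,0,0) (regarding the plane {v₁ = 0} as ℂ), the image of the embedding θ_δ : B² → S², θ_δ(z) = [√(1 - δ|z|²) : √δ z], is exactly the open set {v ∈ S² : v₁ < 2δ - 1}. -/
/-- Inverse stereographic projection from `(1,0,0)`, regarding the plane `{v₁ = 0}` as `ℂ`:
the point of `S² ⊂ ℝ³` whose stereographic coordinate is `w`. -/
noncomputable def stereoInv (w : ℂ) : Fin 3 → ℝ :=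
  ![(‖w‖ ^ 2 - 1) / (‖w‖ ^ 2 + 1), 2 * w.re / (1 + ‖w‖ ^ 2), 2 * w.im / (1 + ‖w‖ ^ 2)]

lemma norm_sq_eq' (w : ℂ) : ‖w‖ ^ 2 = w.re ^ 2 + w.im ^ 2 := by
  rw [Complex.sq_norm, Complex.normSq_apply]; ring

lemma stereoInv_sphere (w : ℂ) :
    (stereoInv w 0) ^ 2 + (stereoInv w 1) ^ 2 + (stereoInv w 2) ^ 2 = 1 := by
  have h := norm_sq_eq' w
  have hpos : (0:ℝ) < w.re ^ 2 + w.im ^ 2 + 1 := by positivity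
  simp only [stereoInv, Matrix.cons_val_zero, Matrix.cons_val_one, Matrix.head_cons,
    Matrix.cons_val_two, Matrix.tail_cons]
  rw [h]
  field_simp
  ring

lemma complex_cancel (a b w : ℂ) (ha : a ≠ 0) (hb : b ≠ 0) :
    (a * b) * (w / a) / b = w := by
  field_simp

/-- the image of `θ_δ : B² → S²`, `θ_δ(z) = [√(1 - δ|z|²) : √δ z]`
(whose stereographic coordinate is `√δ z / √(1 - δ|z|²)`), is `{v ∈ S² : v₁ < 2δ - 1}`. -/
theorem theta_delta_image (δ : ℝ) (hδ₁ : 1 / 2 < δ) (hδ₂ : δ ≤ 1) :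
    {v : Fin 3 → ℝ | ∃ z : ℂ, ‖z‖ < 1 ∧
        v = stereoInv ((Real.sqrt δ : ℂ) * z / (Real.sqrt (1 - δ * ‖z‖ ^ 2) : ℂ))} =
      {v : Fin 3 → ℝ | (v 0) ^ 2 + (v 1) ^ 2 + (v 2) ^ 2 = 1 ∧ v 0 < 2 * δ - 1} := by
  have hδ0 : (0:ℝ) < δ := by linarith
  ext v
  simp only [Set.mem_setOf_eq]
  constructor
  · rintro ⟨z, hz, rfl⟩
    have hzn := norm_nonneg z
    have hr : ‖z‖ ^ 2 < 1 := by nlinarith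
    have hs : 0 < 1 - δ * ‖z‖ ^ 2 := by nlinarith
    set r : ℝ := ‖z‖ ^ 2 with hrdef
    set w := (Real.sqrt δ : ℂ) * z / (Real.sqrt (1 - δ * r) : ℂ) with hwdef
    have hw : ‖w‖ ^ 2 = δ * r / (1 - δ * r) := by
      rw [hwdef, norm_div, norm_mul, Complex.norm_real, Complex.norm_real,
        Real.norm_eq_abs, Real.norm_eq_abs, abs_of_nonneg (Real.sqrt_nonneg _),
        abs_of_nonneg (Real.sqrt_nonneg _), div_pow, mul_pow,
        Real.sq_sqrt hδ0.le, Real.sq_sqrt hs.le, hrdef]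
    refine ⟨stereoInv_sphere w, ?_⟩
    have e1 : ‖w‖ ^ 2 - 1 = (2 * δ * r - 1) / (1 - δ * r) := by
      rw [hw]; field_simp [hs.ne']; ring
    have e2 : ‖w‖ ^ 2 + 1 = 1 / (1 - δ * r) := by
      rw [hw]; field_simp [hs.ne']; ring
    have h0 : stereoInv w 0 = 2 * δ * r - 1 := by
      show (‖w‖ ^ 2 - 1) / (‖w‖ ^ 2 + 1) = 2 * δ * r - 1
      rw [e1, e2]
      field_simp
    rw [h0]
    nlinarith
  · rintro ⟨hsph, hv0⟩
    have ht : 0 < 1 - v 0 := by nlinarith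
    set w : ℂ := ⟨v 1 / (1 - v 0), v 2 / (1 - v 0)⟩ with hwdef
    have hwre : w.re = v 1 / (1 - v 0) := rfl
    have hwim : w.im = v 2 / (1 - v 0) := rfl
    have hw12 : v 1 ^ 2 + v 2 ^ 2 = 1 - v 0 ^ 2 := by nlinarith
    have hwn : ‖w‖ ^ 2 = (1 + v 0) / (1 - v 0) := by
      rw [norm_sq_eq', hwre, hwim, div_pow, div_pow, ← add_div, hw12]
      rw [show (1:ℝ) - v 0 ^ 2 = (1 + v 0) * (1 - v 0) by ring, sq]
      rw [mul_div_mul_right _ _ (ne_of_gt ht)]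
    set c : ℝ := Real.sqrt (2 * δ / (1 - v 0)) with hcdef
    have hc2 : c ^ 2 = 2 * δ / (1 - v 0) := Real.sq_sqrt (by positivity)
    have hcpos : 0 < c := Real.sqrt_pos.mpr (by positivity)
    have hz2 : ‖w / (c:ℂ)‖ ^ 2 = (1 + v 0) / (2 * δ) := by
      rw [norm_div, div_pow, hwn, Complex.norm_real, Real.norm_eq_abs,
        abs_of_pos hcpos, hc2]
      rw [div_div_div_eq, mul_comm (1 + v 0) (1 - v 0),
        mul_div_mul_left _ _ (ne_of_gt ht)]
    refine ⟨w / (c:ℂ), ?_, ?_⟩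
    · have h1 : ‖w / (c:ℂ)‖ ^ 2 < 1 := by
        rw [hz2, div_lt_one (by positivity)]; linarith
      nlinarith [norm_nonneg (w / (c:ℂ))]
    · have h1 : 1 - δ * ‖w / (c:ℂ)‖ ^ 2 = (1 - v 0) / 2 := by
        rw [hz2]; field_simp; ring
      have hs : 0 < Real.sqrt ((1 - v 0) / 2) := Real.sqrt_pos.mpr (by positivity)
      have hreal : c * Real.sqrt ((1 - v 0) / 2) = Real.sqrt δ := by
        rw [hcdef, ← Real.sqrt_mul (by positivity)]
        congr 1
        field_simp
      have hc' : (c:ℂ) ≠ 0 := by exact_mod_cast ne_of_gt hcpos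
      have hs' : ((Real.sqrt ((1 - v 0) / 2) : ℝ) : ℂ) ≠ 0 := by
        exact_mod_cast ne_of_gt hs
      have hkey : (Real.sqrt δ : ℂ) * (w / (c:ℂ)) /
          (Real.sqrt (1 - δ * ‖w / (c:ℂ)‖ ^ 2) : ℂ) = w := by
        rw [h1, ← hreal, Complex.ofReal_mul]
        exact complex_cancel _ _ _ hc' hs'
      rw [hkey]
      funext i
      fin_cases i
      · show v 0 = (‖w‖ ^ 2 - 1) / (‖w‖ ^ 2 + 1)
        rw [hwn]
        rw [div_sub_one (ne_of_gt ht), div_add_one (ne_of_gt ht)]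
        rw [div_div_div_eq, mul_comm, mul_div_mul_left _ _ (ne_of_gt ht)]
        have h2 : (1:ℝ) + v 0 - (1 - v 0) = 2 * v 0 := by ring
        have h3 : (1:ℝ) + v 0 + (1 - v 0) = 2 := by ring
        rw [h2, h3]
        ring
      · show v 1 = 2 * w.re / (1 + ‖w‖ ^ 2)
        rw [hwn, hwre]
        rw [add_div' _ _ _ (ne_of_gt ht)]
        have h3 : (1:ℝ) * (1 - v 0) + (1 + v 0) = 2 := by ring
        rw [h3, mul_div_assoc', div_div_div_eq,
          mul_comm (2 * v 1) (1 - v 0), mul_div_mul_left _ _ (ne_of_gt ht)]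
        ring
      · show v 2 = 2 * w.im / (1 + ‖w‖ ^ 2)
        rw [hwn, hwim]
        rw [add_div' _ _ _ (ne_of_gt ht)]
        have h3 : (1:ℝ) * (1 - v 0) + (1 + v 0) = 2 := by ring
        rw [h3, mul_div_assoc', div_div_div_eq,
          mul_comm (2 * v 2) (1 - v 0), mul_div_mul_left _ _ (ne_of_gt ht)]
        ring
end

section
/- Let τ ∈ (0, 1/2] and v ∈ S² with |v·e₁| ≤ √(1-τ²). Then there exists w ∈ S² such that |v+w| = 2τ and (v+w)·e₁ = 0. Conversely, if such w exists then |v·e₁| ≤ √(1-τ²). -/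
open scoped RealInnerProductSpace

noncomputable def e1 : EuclideanSpace ℝ (Fin 3) := EuclideanSpace.single 0 1

set_option maxHeartbeats 1000000 in
private theorem fooTorus_fiber_exists_aux (τ : ℝ) (hτ0 : 0 < τ) (hτ : τ ≤ 1 / 2)
    (v : EuclideanSpace ℝ (Fin 3)) (hv : ‖v‖ = 1) :
    (∃ w : EuclideanSpace ℝ (Fin 3), ‖w‖ = 1 ∧ ‖v + w‖ = 2 * τ ∧ ⟪v + w, e1⟫ = 0) ↔
      |⟪v, e1⟫| ≤ Real.sqrt (1 - τ ^ 2) := by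
  have hnorm : ∀ x : EuclideanSpace ℝ (Fin 3), ‖x‖ ^ 2 = (x 0)^2 + (x 1)^2 + (x 2)^2 := by
    intro x
    rw [EuclideanSpace.norm_eq, Real.sq_sqrt (by positivity)]
    simp [Fin.sum_univ_three]
  have key : ∀ (x : EuclideanSpace ℝ (Fin 3)) (r : ℝ), 0 ≤ r →
      (x 0)^2 + (x 1)^2 + (x 2)^2 = r ^ 2 → ‖x‖ = r := by
    intro x r hr h
    have h2 : ‖x‖ ^ 2 = r ^ 2 := by rw [hnorm]; exact h
    calc ‖x‖ = Real.sqrt (‖x‖ ^ 2) := (Real.sqrt_sq (norm_nonneg x)).symm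
      _ = Real.sqrt (r ^ 2) := by rw [h2]
      _ = r := Real.sqrt_sq hr
  have ha : ⟪v, e1⟫ = v 0 := by simp [e1, EuclideanSpace.inner_single_right]
  have hv2 : (v 0) ^ 2 + (v 1) ^ 2 + (v 2) ^ 2 = 1 := by
    have := hnorm v; rw [hv] at this; linarith
  rw [ha]
  constructor
  · rintro ⟨w, hw1, hw2, hw3⟩
    have hvw : ∀ i, (v + w) i = v i + w i := fun i => rfl
    have hw0 : w 0 = -(v 0) := by
      have h := hw3
      simp [e1, hvw, EuclideanSpace.inner_single_right] at h
      linarith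
    have h1 : (w 0)^2 + (w 1)^2 + (w 2)^2 = 1 := by
      have := hnorm w; rw [hw1] at this; linarith
    have h2 : (v 0 + w 0)^2 + (v 1 + w 1)^2 + (v 2 + w 2)^2 = 4 * τ ^ 2 := by
      have h := hnorm (v + w)
      rw [hw2] at h
      simp only [hvw] at h
      linarith
    have hss : (w 1)^2 + (w 2)^2 = (v 1)^2 + (v 2)^2 := by nlinarith [hw0, h1, hv2]
    have hD : v 1 * w 1 + v 2 * w 2 = 2 * τ ^ 2 - ((v 1)^2 + (v 2)^2) := by
      nlinarith [hw0, h2, hss]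
    have hCS : (v 1 * w 1 + v 2 * w 2)^2 ≤ ((v 1)^2 + (v 2)^2) * ((w 1)^2 + (w 2)^2) := by
      nlinarith [sq_nonneg (v 1 * w 2 - v 2 * w 1)]
    have hτs : τ ^ 2 ≤ (v 1)^2 + (v 2)^2 := by
      nlinarith [hD, hCS, hss, mul_pos hτ0 hτ0]
    have haτ : (v 0) ^ 2 ≤ 1 - τ ^ 2 := by linarith
    calc |v 0| = Real.sqrt ((v 0) ^ 2) := (Real.sqrt_sq_eq_abs _).symm
      _ ≤ Real.sqrt (1 - τ ^ 2) := Real.sqrt_le_sqrt haτ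
  · intro hA
    have hτ1 : 0 ≤ 1 - τ ^ 2 := by nlinarith
    have haτ : (v 0) ^ 2 ≤ 1 - τ ^ 2 := by
      have := Real.sq_sqrt hτ1
      nlinarith [sq_abs (v 0), Real.sqrt_nonneg (1 - τ ^ 2), abs_nonneg (v 0)]
    set a : ℝ := v 0 with ha0
    set b : ℝ := v 1 with hb0
    set c : ℝ := v 2 with hc0
    have hsa : b ^ 2 + c ^ 2 = 1 - a ^ 2 := by linarith
    have hsτ : τ ^ 2 ≤ b ^ 2 + c ^ 2 := by nlinarith
    have hs0 : 0 < b ^ 2 + c ^ 2 := by nlinarith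
    obtain ⟨q, hq0, hq2⟩ : ∃ q : ℝ, 0 ≤ q ∧ q ^ 2 = b ^ 2 + c ^ 2 - τ ^ 2 :=
      ⟨Real.sqrt _, Real.sqrt_nonneg _, Real.sq_sqrt (by linarith)⟩
    set s : ℝ := b ^ 2 + c ^ 2 with hs
    set p : ℝ := 2 * τ ^ 2 / s with hp
    set t : ℝ := 2 * τ * q / s with ht
    have hps : p * s = 2 * τ ^ 2 := by rw [hp]; field_simp
    have hsum : (p ^ 2 + t ^ 2) * s = 4 * τ ^ 2 := by
      rw [hp, ht]
      field_simp
      linear_combination 4 * hq2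
    set w : EuclideanSpace ℝ (Fin 3) :=
      (WithLp.equiv 2 (Fin 3 → ℝ)).symm ![-a, p * b - t * c - b, p * c + t * b - c] with hwdef
    have hw0' : w 0 = -a := by rw [hwdef]; rfl
    have hw1' : w 1 = p * b - t * c - b := by rw [hwdef]; rfl
    have hw2' : w 2 = p * c + t * b - c := by rw [hwdef]; rfl
    have hvwi : ∀ i, (v + w) i = v i + w i := fun i => rfl
    refine ⟨w, ?_, ?_, ?_⟩
    · apply key _ _ zero_le_one
      rw [hw0', hw1', hw2']
      linear_combination hsum - 2 * hps + hv2 + (p ^ 2 + t ^ 2 - 2 * p) * hs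
    · apply key _ _ (by positivity)
      simp only [hvwi]
      rw [hw0', hw1', hw2', ← ha0, ← hb0, ← hc0]
      linear_combination hsum + (p ^ 2 + t ^ 2) * hs
    · simp [e1, hvwi, hw0', ← ha0, EuclideanSpace.inner_single_right]

/-- for `τ ∈ (0, 1/2]` and `v ∈ S²`, there exists `w ∈ S²` with `|v+w| = 2τ`
and `(v+w)·e₁ = 0` if and only if `|v·e₁| ≤ √(1-τ²)`. -/
theorem fooTorus_fiber_exists (τ : ℝ) (hτ0 : 0 < τ) (hτ : τ ≤ 1 / 2)
    (v : EuclideanSpace ℝ (Fin 3)) (hv : ‖v‖ = 1) :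
    (∃ w : EuclideanSpace ℝ (Fin 3), ‖w‖ = 1 ∧ ‖v + w‖ = 2 * τ ∧ ⟪v + w, e1⟫ = 0) ↔
      |⟪v, e1⟫| ≤ Real.sqrt (1 - τ ^ 2) :=
  fooTorus_fiber_exists_aux τ hτ0 hτ v hv
end
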